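/- Let p ≥ 5 be a prime and d an integer with p ∤ d, and set f(d,m,n) = −2dm⁶ − 2d²m⁶ − 2m⁴n² + 4dm⁴n² + 4d²m⁴n² − 2d³m⁴n² − 2m²n⁴ + 4dm²n⁴ + 4d²m²n⁴ − 2d³m²n⁴ − 2dn⁶ − 2d²n⁶. Then ∑_{m=1}^{p−1} ∑_{n=1}^{p−1} f(d,m,n)·(dm² − n²)^{p−3}·(dn² − m²)^{p−3} ≡ 0 (mod p). -/
import Mathlib


open Finset

private def G (p : ℕ) (d x y : ZMod p) : ZMod p :=
  (-2 * d * x ^ 6 - 2 * d ^ 2 * x ^ 6 - 2 * x ^ 4 * y ^ 2 + 4 * d * x ^ 4 * y ^ 2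
        + 4 * d ^ 2 * x ^ 4 * y ^ 2 - 2 * d ^ 3 * x ^ 4 * y ^ 2 - 2 * x ^ 2 * y ^ 4
        + 4 * d * x ^ 2 * y ^ 4 + 4 * d ^ 2 * x ^ 2 * y ^ 4 - 2 * d ^ 3 * x ^ 2 * y ^ 4
        - 2 * d * y ^ 6 - 2 * d ^ 2 * y ^ 6)
      * (d * x ^ 2 - y ^ 2) ^ (p - 3) * (d * y ^ 2 - x ^ 2) ^ (p - 3)

private lemma zIcc_reindex {p : ℕ} [NeZero p] {M : Type*} [AddCommMonoid M]
    (f : ℤ → M) (h : ZMod p → M)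
    (hfh : ∀ m ∈ Icc (1 : ℤ) ((p : ℤ) - 1), f m = h (m : ZMod p)) :
    ∑ m ∈ Icc (1 : ℤ) ((p : ℤ) - 1), f m
      = ∑ x ∈ univ.filter (fun x : ZMod p => x ≠ 0), h x := by
  have hp1 : (1 : ℤ) ≤ (p : ℤ) := by exact_mod_cast Nat.one_le_iff_ne_zero.mpr (NeZero.ne p)
  refine Finset.sum_nbij' (i := fun m => (m : ZMod p)) (j := fun x => (x.val : ℤ))
    ?_ ?_ ?_ ?_ ?_
  · intro m hm
    simp only [mem_Icc] at hm
    simp only [mem_filter, mem_univ, true_and]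
    intro h0
    rw [ZMod.intCast_zmod_eq_zero_iff_dvd] at h0
    have := Int.le_of_dvd (by linarith) h0
    linarith
  · intro x hx
    simp only [mem_filter, mem_univ, true_and] at hx
    have h1 : x.val ≠ 0 := fun h => hx (by rwa [ZMod.val_eq_zero] at h)
    have h2 : x.val < p := ZMod.val_lt x
    simp only [mem_Icc]
    omega
  · intro m hm
    simp only [mem_Icc] at hm
    have h0 : (m.toNat : ℤ) = m := Int.toNat_of_nonneg (by linarith)
    have h1 : m.toNat < p := by omega
    show (((m : ZMod p)).val : ℤ) = m
    have h2 : ((m : ZMod p)) = ((m.toNat : ℕ) : ZMod p) := by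
      conv_lhs => rw [← h0]
      rw [Int.cast_natCast]
    rw [h2, ZMod.val_natCast_of_lt h1]
    exact h0
  · intro x hx
    show (((x.val : ℤ) : ZMod p)) = x
    push_cast [ZMod.natCast_val, ZMod.cast_id]
    rfl
  · exact hfh

private lemma natne (p k : ℕ) [NeZero p] (h : ¬ p ∣ k) : ((k : ℕ) : ZMod p) ≠ 0 := by
  intro h0
  exact h ((ZMod.natCast_eq_zero_iff k p).mp h0)

private lemma alg {R : Type*} [CommRing R] (f2 f1 u v A B : R)
    (hf : f2 = 64 * f1) (h64 : 64 * u * u = v) :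
    f2 * (u * A) * (u * B) = v * (f1 * A * B) := by
  linear_combination (u * A * (u * B)) * hf + (f1 * A * B) * h64

private lemma G_scale (p : ℕ) (hp : p.Prime) (hp5 : 5 ≤ p) (d x y : ZMod p) :
    G p d (2 * x) (2 * y) = 4 ^ (p - 2) * G p d x y := by
  haveI : Fact p.Prime := ⟨hp⟩
  have h4 : (4 : ZMod p) ≠ 0 := by
    have := natne p 4 (fun h => by have := Nat.le_of_dvd (by norm_num) h; omega)
    norm_num at this
    exact this
  have hpow : (4 : ZMod p) ^ (p - 1) = 1 := ZMod.pow_card_sub_one_eq_one h4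
  have h64 : (64 : ZMod p) * 4 ^ (p - 3) * 4 ^ (p - 3) = 4 ^ (p - 2) := by
    have e : (64 : ZMod p) * 4 ^ (p - 3) * 4 ^ (p - 3) = 4 ^ (3 + (p - 3) + (p - 3)) := by
      rw [pow_add, pow_add]; norm_num
    rw [e, show 3 + (p - 3) + (p - 3) = (p - 1) + (p - 2) by omega, pow_add, hpow, one_mul]
  unfold G
  have e1 : d * (2 * x) ^ 2 - (2 * y) ^ 2 = 4 * (d * x ^ 2 - y ^ 2) := by ring
  have e2 : d * (2 * y) ^ 2 - (2 * x) ^ 2 = 4 * (d * y ^ 2 - x ^ 2) := by ring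
  rw [e1, e2, mul_pow 4 (d * x ^ 2 - y ^ 2) (p - 3), mul_pow 4 (d * y ^ 2 - x ^ 2) (p - 3)]
  refine alg _ _ _ _ _ _ ?_ h64
  ring

private lemma main0 (p : ℕ) [hf : Fact p.Prime] (hp5 : 5 ≤ p) (d : ZMod p) :
    ∑ x ∈ univ.filter (fun x : ZMod p => x ≠ 0),
      ∑ y ∈ univ.filter (fun y : ZMod p => y ≠ 0), G p d x y = 0 := by
  have hp := hf.out
  have h2 : (2 : ZMod p) ≠ 0 := by
    have := natne p 2 (fun h => by have := Nat.le_of_dvd (by norm_num) h; omega)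
    norm_num at this; exact this
  have h3 : (3 : ZMod p) ≠ 0 := by
    have := natne p 3 (fun h => by have := Nat.le_of_dvd (by norm_num) h; omega)
    norm_num at this; exact this
  set T := ∑ x ∈ univ.filter (fun x : ZMod p => x ≠ 0),
      ∑ y ∈ univ.filter (fun y : ZMod p => y ≠ 0), G p d x y with hT
  have hmem : ∀ i : ZMod p, (i ∈ univ.filter (fun x : ZMod p => x ≠ 0)) ↔
      ((Equiv.mulLeft₀ (2 : ZMod p) h2) i ∈ univ.filter (fun x : ZMod p => x ≠ 0)) := by
    intro i
    simp [Equiv.mulLeft₀, mul_ne_zero_iff, h2]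
  have step : ∑ x ∈ univ.filter (fun x : ZMod p => x ≠ 0),
      ∑ y ∈ univ.filter (fun y : ZMod p => y ≠ 0), G p d (2 * x) (2 * y) = T := by
    rw [hT]
    refine Finset.sum_equiv (Equiv.mulLeft₀ (2 : ZMod p) h2) hmem (fun x hx => ?_)
    refine Finset.sum_equiv (Equiv.mulLeft₀ (2 : ZMod p) h2) hmem (fun y hy => ?_)
    rfl
  have scale : ∑ x ∈ univ.filter (fun x : ZMod p => x ≠ 0),
      ∑ y ∈ univ.filter (fun y : ZMod p => y ≠ 0), G p d (2 * x) (2 * y)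
      = 4 ^ (p - 2) * T := by
    rw [hT, Finset.mul_sum]
    refine Finset.sum_congr rfl fun x hx => ?_
    rw [Finset.mul_sum]
    exact Finset.sum_congr rfl fun y hy => G_scale p hp hp5 d x y
  have key : T = 4 ^ (p - 2) * T := step.symm.trans scale
  have h4T : (4 : ZMod p) * T = T := by
    have h4 : (4 : ZMod p) ≠ 0 := by
      have := natne p 4 (fun h => by have := Nat.le_of_dvd (by norm_num) h; omega)
      norm_num at this; exact this
    have hpow : (4 : ZMod p) ^ (p - 1) = 1 := ZMod.pow_card_sub_one_eq_one h4
    calc (4 : ZMod p) * T = 4 * (4 ^ (p - 2) * T) := by rw [← key]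
      _ = 4 ^ (1 + (p - 2)) * T := by rw [pow_add, pow_one, mul_assoc]
      _ = T := by rw [show 1 + (p - 2) = p - 1 by omega, hpow, one_mul]
  have h3T : (3 : ZMod p) * T = 0 := by linear_combination h4T
  exact (mul_eq_zero.mp h3T).resolve_left h3


theorem stmt_10 (p : ℕ) (hp : p.Prime) (hp5 : 5 ≤ p) (d : ℤ) (hd : ¬ (p : ℤ) ∣ d) :
    (p : ℤ) ∣ ∑ m ∈ Finset.Icc (1 : ℤ) ((p : ℤ) - 1), ∑ n ∈ Finset.Icc (1 : ℤ) ((p : ℤ) - 1),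
      (-2 * d * m ^ 6 - 2 * d ^ 2 * m ^ 6 - 2 * m ^ 4 * n ^ 2 + 4 * d * m ^ 4 * n ^ 2
        + 4 * d ^ 2 * m ^ 4 * n ^ 2 - 2 * d ^ 3 * m ^ 4 * n ^ 2 - 2 * m ^ 2 * n ^ 4
        + 4 * d * m ^ 2 * n ^ 4 + 4 * d ^ 2 * m ^ 2 * n ^ 4 - 2 * d ^ 3 * m ^ 2 * n ^ 4
        - 2 * d * n ^ 6 - 2 * d ^ 2 * n ^ 6)
      * (d * m ^ 2 - n ^ 2) ^ (p - 3) * (d * n ^ 2 - m ^ 2) ^ (p - 3) := by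
  haveI : Fact p.Prime := ⟨hp⟩
  rw [← ZMod.intCast_zmod_eq_zero_iff_dvd]
  push_cast
  have final := main0 p hp5 ((d : ZMod p))
  refine Eq.trans ?_ final
  refine zIcc_reindex _ _ (fun m hm => ?_)
  refine zIcc_reindex _ _ (fun n hn => ?_)
  show _ = G p ((d : ZMod p)) ((m : ZMod p)) ((n : ZMod p))
  unfold G
  ring
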